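/- For 0 < α₁ < α ≤ 1, the ratio of the density of α₁ Y_{1/α₁} to the density of α Y_{1/α} tends to 0 as x → ∞, where Y_r denotes a chi-squared variable with r degrees of freedom; consequently there exists x₀ ≥ 0 such that P(α₁ Y_{1/α₁} ≥ x) ≤ P(α Y_{1/α} ≥ x) for all x ≥ x₀. -/

import Mathlib

open MeasureTheory Filter

/-- The density of the scaled chi-squared random variable `β • Y_{1/β}` (chi-squared with
`1/β` degrees of freedom scaled by `β`), i.e. the Gamma density with shape `1/(2β)` and
scale `2β`. -/
noncomputable def scaledChiSqDensity (β x : ℝ) : ℝ :=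
  x ^ (1 / (2 * β) - 1) * Real.exp (-x / (2 * β)) /
    ((2 * β) ^ (1 / (2 * β)) * Real.Gamma (1 / (2 * β)))

lemma scaledChiSqDensity_pos {β x : ℝ} (hβ : 0 < β) (hx : 0 < x) :
    0 < scaledChiSqDensity β x := by
  unfold scaledChiSqDensity
  have h2β : 0 < 2 * β := by linarith
  have hs : 0 < 1 / (2 * β) := by positivity
  positivity

lemma scaledChiSqDensity_integrableOn {β : ℝ} (hβ : 0 < β) :
    IntegrableOn (scaledChiSqDensity β) (Set.Ioi 0) := by
  have h2β : 0 < 2 * β := by linarith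
  have hb : 0 < 1 / (2 * β) := by positivity
  have hs : (-1 : ℝ) < 1 / (2 * β) - 1 := by linarith
  have h := (integrableOn_rpow_mul_exp_neg_mul_rpow hs (zero_lt_one' ℝ) hb).const_mul
    (((2 * β) ^ (1 / (2 * β)) * Real.Gamma (1 / (2 * β)))⁻¹)
  rw [← IntegrableOn] at h
  refine h.congr_fun (fun x hx => ?_) measurableSet_Ioi
  unfold scaledChiSqDensity
  dsimp only
  rw [Real.rpow_one, show -(1 / (2 * β)) * x = -x / (2 * β) by ring, div_eq_mul_inv]
  ring

lemma scaledChiSqDensity_ratio_eq {α₁ α x : ℝ} (h₁ : 0 < α₁) (h₂ : 0 < α) (hx : 0 < x) :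
    scaledChiSqDensity α₁ x / scaledChiSqDensity α x =
      ((2 * α) ^ (1 / (2 * α)) * Real.Gamma (1 / (2 * α)) /
        ((2 * α₁) ^ (1 / (2 * α₁)) * Real.Gamma (1 / (2 * α₁)))) *
      (x ^ (1 / (2 * α₁) - 1 / (2 * α)) *
        Real.exp (-(1 / (2 * α₁) - 1 / (2 * α)) * x)) := by
  have h2a : (0:ℝ) < 2 * α := by linarith
  have h2a1 : (0:ℝ) < 2 * α₁ := by linarith
  have hG : 0 < Real.Gamma (1 / (2 * α)) := Real.Gamma_pos_of_pos (by positivity)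
  have hG1 : 0 < Real.Gamma (1 / (2 * α₁)) := Real.Gamma_pos_of_pos (by positivity)
  have hp : (0:ℝ) < (2 * α) ^ (1 / (2 * α)) := Real.rpow_pos_of_pos h2a _
  have hp1 : (0:ℝ) < (2 * α₁) ^ (1 / (2 * α₁)) := Real.rpow_pos_of_pos h2a1 _
  have hxp : (0:ℝ) < x ^ (1 / (2 * α) - 1) := Real.rpow_pos_of_pos hx _
  have hxe : x ^ (1 / (2 * α₁) - 1)
      = x ^ (1 / (2 * α₁) - 1 / (2 * α)) * x ^ (1 / (2 * α) - 1) := by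
    rw [← Real.rpow_add hx]; congr 1; ring
  have hee : Real.exp (-x / (2 * α₁))
      = Real.exp (-(1 / (2 * α₁) - 1 / (2 * α)) * x) * Real.exp (-x / (2 * α)) := by
    rw [← Real.exp_add]; congr 1; field_simp; ring
  unfold scaledChiSqDensity
  rw [hxe, hee]
  have hE : Real.exp (-x / (2 * α)) ≠ 0 := Real.exp_ne_zero _
  field_simp

/-- For `0 < α₁ < α ≤ 1`, the ratio of the density of `α₁ Y_{1/α₁}` to the density of
`α Y_{1/α}` tends to `0` as `x → ∞`; consequently there exists `x₀ ≥ 0` such that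
`P(α₁ Y_{1/α₁} ≥ x) ≤ P(α Y_{1/α} ≥ x)` for all `x ≥ x₀` (tails expressed as integrals
of the densities). -/
theorem scaledChiSq_density_ratio_tendsto_zero_and_tail_le
    (α₁ α : ℝ) (h₁ : 0 < α₁) (h₂ : α₁ < α) (h₃ : α ≤ 1) :
    Tendsto (fun x => scaledChiSqDensity α₁ x / scaledChiSqDensity α x) atTop (nhds 0) ∧
    ∃ x₀ : ℝ, 0 ≤ x₀ ∧ ∀ x ≥ x₀,
      (∫ t in Set.Ici x, scaledChiSqDensity α₁ t) ≤ ∫ t in Set.Ici x, scaledChiSqDensity α t := by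
  have hα : 0 < α := h₁.trans h₂
  have hd : 0 < 1 / (2 * α₁) - 1 / (2 * α) := by
    rw [sub_pos]
    apply one_div_lt_one_div_of_lt <;> linarith
  set c : ℝ := (2 * α) ^ (1 / (2 * α)) * Real.Gamma (1 / (2 * α)) /
        ((2 * α₁) ^ (1 / (2 * α₁)) * Real.Gamma (1 / (2 * α₁))) with hc
  have htend : Tendsto (fun x => scaledChiSqDensity α₁ x / scaledChiSqDensity α x)
      atTop (nhds 0) := by
    have base := (tendsto_rpow_mul_exp_neg_mul_atTop_nhds_zero
      (1 / (2 * α₁) - 1 / (2 * α)) _ hd).const_mul c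
    rw [mul_zero] at base
    refine base.congr' ?_
    filter_upwards [eventually_gt_atTop 0] with x hx
    exact (scaledChiSqDensity_ratio_eq h₁ hα hx).symm
  refine ⟨htend, ?_⟩
  have hev : ∀ᶠ x in atTop,
      scaledChiSqDensity α₁ x / scaledChiSqDensity α x ≤ 1 := by
    filter_upwards [htend.eventually_le_const (by norm_num : (0:ℝ) < 1)] with x hx
      using hx
  obtain ⟨x₁, hx₁⟩ := eventually_atTop.mp hev
  refine ⟨max x₁ 1, le_trans zero_le_one (le_max_right _ _), fun x hx => ?_⟩
  have hx1 : (1:ℝ) ≤ x := le_trans (le_max_right _ _) hx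
  have hsub : Set.Ici x ⊆ Set.Ioi (0:ℝ) := fun t ht => lt_of_lt_of_le zero_lt_one (hx1.trans ht)
  have hint1 : IntegrableOn (scaledChiSqDensity α₁) (Set.Ici x) :=
    (scaledChiSqDensity_integrableOn h₁).mono_set hsub
  have hint2 : IntegrableOn (scaledChiSqDensity α) (Set.Ici x) :=
    (scaledChiSqDensity_integrableOn hα).mono_set hsub
  refine setIntegral_mono_on hint1 hint2 measurableSet_Ici (fun t ht => ?_)
  have htpos : 0 < t := hsub ht
  have hratio : scaledChiSqDensity α₁ t / scaledChiSqDensity α t ≤ 1 :=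
    hx₁ t (le_trans (le_max_left _ _) (le_trans hx ht))
  have hdpos := scaledChiSqDensity_pos hα htpos
  exact (div_le_one hdpos).mp hratio
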